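/- The pair (Â, B) satisfies the Kalman rank condition, i.e. span{Â^l B v : v ∈ ℝ^m, 0 ≤ l ≤ n−1} = ℝ^d, and moreover V = exp(Â) ∫₀¹ exp(−sÂ) B B* exp(−sÂ*) ds; in particular span{Â^l B v : v ∈ ℝ^m, 0 ≤ l ≤ k−1} = E_k for every k ∈ {1,…,n}. -/

import Mathlib

open Matrix MeasureTheory

noncomputable section

/-- The span of the vectors `A^l B v` for `l < N`, `v ∈ ℝ^m`; for `N = k` this is `E_k`. -/
def kalmanSpan (d m : ℕ) (A : Matrix (Fin d) (Fin d) ℝ) (B : Matrix (Fin d) (Fin m) ℝ)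
    (N : ℕ) : Submodule ℝ (Fin d → ℝ) :=
  Submodule.span ℝ {x | ∃ l, l < N ∧ ∃ v : Fin m → ℝ, x = (A ^ l * B).mulVec v}

/-- `d_k = dim E_k` (with `d_0 = 0`). -/
def dk {d m : ℕ} (A : Matrix (Fin d) (Fin d) ℝ) (B : Matrix (Fin d) (Fin m) ℝ) (k : ℕ) : ℕ :=
  Module.finrank ℝ (kalmanSpan d m A B k)

/-- The level of an index `j` (zero-based): the unique `k ≥ 1` with `d_{k−1} ≤ j < d_k`
(zero-based), i.e. `d_{k−1} < j+1 ≤ d_k` in one-based labelling. -/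
def lvl {d m : ℕ} (A : Matrix (Fin d) (Fin d) ℝ) (B : Matrix (Fin d) (Fin m) ℝ)
    (j : Fin d) : ℕ :=
  sInf {k : ℕ | (j : ℕ) < dk A B k}

/-- The entries of the matrices `u_k`, arranged as a `d × m` array:
for `d_{k−1} < j ≤ d_k` (one-based) the `j`-th row of `u_k` is
`(⟨e_j, A^{k−1} B e_i⟩ / (k−1)!)_i`. -/
def uEnt {d m : ℕ} (A : Matrix (Fin d) (Fin d) ℝ) (B : Matrix (Fin d) (Fin m) ℝ)
    (e : Fin d → Fin d → ℝ) (j : Fin d) (i : Fin m) : ℝ :=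
  (e j ⬝ᵥ fun a => (A ^ (lvl A B j - 1) * B) a i) / Nat.factorial (lvl A B j - 1)

/-- `Û(r)`: the `d × m` matrix whose `j`-th row, for `d_{k−1} < j ≤ d_k`, is `r^{k−1}`
times the corresponding row of `u_k`. -/
def Uhat {d m : ℕ} (A : Matrix (Fin d) (Fin d) ℝ) (B : Matrix (Fin d) (Fin m) ℝ)
    (e : Fin d → Fin d → ℝ) (r : ℝ) : Matrix (Fin d) (Fin m) ℝ :=
  Matrix.of fun j i => r ^ (lvl A B j - 1) * uEnt A B e j i

/-- `J_t`: the diagonal matrix whose `j`-th diagonal entry, for `d_{k−1} < j ≤ d_k`,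
is `t^{k−1/2}` (real power). -/
def Jmat {d m : ℕ} (A : Matrix (Fin d) (Fin d) ℝ) (B : Matrix (Fin d) (Fin m) ℝ)
    (t : ℝ) : Matrix (Fin d) (Fin d) ℝ :=
  Matrix.diagonal fun j => t ^ ((lvl A B j : ℝ) - 1 / 2)

/-- `D_ε`: the diagonal matrix whose `j`-th diagonal entry, for `d_{k−1} < j ≤ d_k`,
is `ε^{k−1}`. -/
def Dmat {d m : ℕ} (A : Matrix (Fin d) (Fin d) ℝ) (B : Matrix (Fin d) (Fin m) ℝ)
    (ε : ℝ) : Matrix (Fin d) (Fin d) ℝ :=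
  Matrix.diagonal fun j => ε ^ (lvl A B j - 1)

/-- `V`: the `n × n` block matrix with `(k,l)`-block
`V_{kl} = (−1)^{l+1} u_k u_l* (k−1)!(l−1)!/(k+l−1)!`, written entrywise. -/
def Vmat {d m : ℕ} (A : Matrix (Fin d) (Fin d) ℝ) (B : Matrix (Fin d) (Fin m) ℝ)
    (e : Fin d → Fin d → ℝ) : Matrix (Fin d) (Fin d) ℝ :=
  Matrix.of fun a b =>
    (-1 : ℝ) ^ (lvl A B b + 1) *
      ((Nat.factorial (lvl A B a - 1) * Nat.factorial (lvl A B b - 1) : ℝ) /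
        Nat.factorial (lvl A B a + lvl A B b - 1)) *
      ∑ i : Fin m, uEnt A B e a i * uEnt A B e b i

/-- `Γ_t^ε = ∫₀ᵗ exp(−εsA) B B* exp(−εsA*) ds`, defined entrywise. -/
def Gamma {d m : ℕ} (A : Matrix (Fin d) (Fin d) ℝ) (B : Matrix (Fin d) (Fin m) ℝ)
    (ε t : ℝ) : Matrix (Fin d) (Fin d) ℝ :=
  Matrix.of fun i j => ∫ s in (0:ℝ)..t,
    (NormedSpace.exp ((-(ε * s)) • A) * B * Bᵀ * NormedSpace.exp ((-(ε * s)) • Aᵀ)) i j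

open Classical in
/-- `Â`: the matrix characterised in the orthonormal basis `e` by
`⟨e_i, Â e_j⟩ = ⟨e_i, A e_j⟩` whenever there is `k ∈ {1,…,n−1}` with
`d_{k−1} < j ≤ d_k` and `d_k < i ≤ d_{k+1}` (one-based indices), and
`⟨e_i, Â e_j⟩ = 0` otherwise. -/
def Ahat {d m : ℕ} (A : Matrix (Fin d) (Fin d) ℝ) (B : Matrix (Fin d) (Fin m) ℝ)
    (e : Fin d → Fin d → ℝ) (n : ℕ) : Matrix (Fin d) (Fin d) ℝ :=
  Matrix.of fun a b =>
    ∑ i : Fin d, ∑ j : Fin d,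
      (if ∃ k, 1 ≤ k ∧ k ≤ n - 1 ∧
            (dk A B (k - 1) < (j : ℕ) + 1 ∧ (j : ℕ) + 1 ≤ dk A B k) ∧
            (dk A B k < (i : ℕ) + 1 ∧ (i : ℕ) + 1 ≤ dk A B (k + 1))
        then e i ⬝ᵥ A.mulVec (e j) else 0) * e i a * e j b

section PartA
variable {d m : ℕ} (A : Matrix (Fin d) (Fin d) ℝ) (B : Matrix (Fin d) (Fin m) ℝ)

lemma kalmanSpan_mono : Monotone (kalmanSpan d m A B) := by
  intro N N' h
  apply Submodule.span_mono
  rintro x ⟨l, hl, v, hv⟩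
  exact ⟨l, lt_of_lt_of_le hl h, v, hv⟩

lemma dk_mono : Monotone (dk A B) := fun a b h =>
  Submodule.finrank_mono (kalmanSpan_mono A B h)

lemma dk_zero : dk A B 0 = 0 := by
  have : kalmanSpan d m A B 0 = ⊥ := by
    rw [kalmanSpan, Submodule.span_eq_bot]
    rintro x ⟨l, hl, -⟩
    omega
  rw [dk, this, finrank_bot]

lemma mem_kalmanSpan {N l : ℕ} (hl : l < N) (v : Fin m → ℝ) :
    (A ^ l * B).mulVec v ∈ kalmanSpan d m A B N :=
  Submodule.subset_span ⟨l, hl, v, rfl⟩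

variable {n : ℕ}

lemma dk_n (hK : kalmanSpan d m A B n = ⊤) : dk A B n = d := by
  rw [dk, hK, finrank_top, Module.finrank_pi]
  simp

lemma lvl_le_iff (hK : kalmanSpan d m A B n = ⊤) (j : Fin d) (k : ℕ) :
    lvl A B j ≤ k ↔ (j : ℕ) < dk A B k := by
  have hn : (j : ℕ) < dk A B n := by rw [dk_n A B hK]; exact j.2
  have hne : {k : ℕ | (j : ℕ) < dk A B k}.Nonempty := ⟨n, hn⟩
  constructor
  · intro h
    have hmem := Nat.sInf_mem hne
    exact lt_of_lt_of_le hmem (dk_mono A B h)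
  · intro h
    exact Nat.sInf_le h

lemma one_le_lvl (hK : kalmanSpan d m A B n = ⊤) (j : Fin d) : 1 ≤ lvl A B j := by
  by_contra h
  push_neg at h
  have h0 : lvl A B j ≤ 0 := by omega
  have := (lvl_le_iff A B hK j 0).mp h0
  rw [dk_zero] at this
  omega

lemma lvl_le_n (hK : kalmanSpan d m A B n = ⊤) (j : Fin d) : lvl A B j ≤ n := by
  rw [lvl_le_iff A B hK j n, dk_n A B hK]
  exact j.2

lemma lvl_eq_iff (hK : kalmanSpan d m A B n = ⊤) (j : Fin d) (k : ℕ) (hk : 1 ≤ k) :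
    lvl A B j = k ↔ (dk A B (k-1) ≤ (j : ℕ) ∧ (j : ℕ) < dk A B k) := by
  have h1 := lvl_le_iff A B hK j k
  have h2 := lvl_le_iff A B hK j (k-1)
  constructor
  · intro h
    refine ⟨?_, h1.mp (le_of_eq h)⟩
    by_contra hc
    push_neg at hc
    have := h2.mpr hc
    omega
  · rintro ⟨ha, hb⟩
    have := h1.mpr hb
    have : ¬ lvl A B j ≤ k - 1 := fun hc => by have := h2.mp hc; omega
    omega

end PartA
section PartB
variable {d m : ℕ}

/-- The matrix whose rows are the basis vectors `e i`. -/
def Emat {d : ℕ} (e : Fin d → Fin d → ℝ) : Matrix (Fin d) (Fin d) ℝ := Matrix.of e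

def Deq (A : Matrix (Fin d) (Fin d) ℝ) (B : Matrix (Fin d) (Fin m) ℝ) (k : ℕ) :
    Matrix (Fin d) (Fin d) ℝ :=
  Matrix.diagonal fun j => if lvl A B j = k then (1:ℝ) else 0

def Dle (A : Matrix (Fin d) (Fin d) ℝ) (B : Matrix (Fin d) (Fin m) ℝ) (k : ℕ) :
    Matrix (Fin d) (Fin d) ℝ :=
  Matrix.diagonal fun j => if lvl A B j ≤ k then (1:ℝ) else 0

def Dgt (A : Matrix (Fin d) (Fin d) ℝ) (B : Matrix (Fin d) (Fin m) ℝ) (k : ℕ) :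
    Matrix (Fin d) (Fin d) ℝ :=
  Matrix.diagonal fun j => if k < lvl A B j then (1:ℝ) else 0

def Cmat (A : Matrix (Fin d) (Fin d) ℝ) (B : Matrix (Fin d) (Fin m) ℝ)
    (e : Fin d → Fin d → ℝ) : Matrix (Fin d) (Fin d) ℝ :=
  Matrix.of fun i j => if lvl A B i = lvl A B j + 1 then e i ⬝ᵥ A.mulVec (e j) else 0

variable {A : Matrix (Fin d) (Fin d) ℝ} {B : Matrix (Fin d) (Fin m) ℝ}
  {e : Fin d → Fin d → ℝ} {n : ℕ}

lemma Emat_mul_transpose (h_on : ∀ i j : Fin d, e i ⬝ᵥ e j = if i = j then (1:ℝ) else 0) :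
    Emat e * (Emat e)ᵀ = 1 := by
  ext i j
  rw [Matrix.mul_apply, Matrix.one_apply, ← h_on i j]
  rfl

lemma Emat_transpose_mul (h_on : ∀ i j : Fin d, e i ⬝ᵥ e j = if i = j then (1:ℝ) else 0) :
    (Emat e)ᵀ * Emat e = 1 :=
  mul_eq_one_comm.mp (Emat_mul_transpose h_on)

lemma one_le_n (hd : 0 < d) (hK : kalmanSpan d m A B n = ⊤) : 1 ≤ n := by
  by_contra h
  push_neg at h
  interval_cases n
  have hbot : kalmanSpan d m A B 0 = ⊥ := by
    rw [kalmanSpan, Submodule.span_eq_bot]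
    rintro x ⟨l, hl, -⟩
    omega
  rw [hbot] at hK
  have : Nontrivial (Fin d → ℝ) := by
    have : Nonempty (Fin d) := ⟨⟨0, hd⟩⟩
    infer_instance
  exact bot_ne_top hK

lemma cond_iff (hd : 0 < d) (hK : kalmanSpan d m A B n = ⊤) (i j : Fin d) :
    (∃ k, 1 ≤ k ∧ k ≤ n - 1 ∧
        (dk A B (k - 1) < (j : ℕ) + 1 ∧ (j : ℕ) + 1 ≤ dk A B k) ∧
        (dk A B k < (i : ℕ) + 1 ∧ (i : ℕ) + 1 ≤ dk A B (k + 1))) ↔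
      lvl A B i = lvl A B j + 1 := by
  have hn := one_le_n hd hK
  constructor
  · rintro ⟨k, hk1, hkn, ⟨hj1, hj2⟩, ⟨hi1, hi2⟩⟩
    have hj : lvl A B j = k := (lvl_eq_iff A B hK j k hk1).mpr ⟨by omega, by omega⟩
    have hi : lvl A B i = k + 1 := by
      rw [lvl_eq_iff A B hK i (k+1) (by omega)]
      refine ⟨?_, by omega⟩
      simpa using (by omega : dk A B k ≤ (i:ℕ))
    omega
  · intro h
    refine ⟨lvl A B j, one_le_lvl A B hK j, ?_, ?_, ?_⟩
    · have := lvl_le_n A B hK i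
      omega
    · have := (lvl_eq_iff A B hK j (lvl A B j) (one_le_lvl A B hK j)).mp rfl
      omega
    · have := (lvl_eq_iff A B hK i (lvl A B j + 1) (by omega)).mp h
      simp only [Nat.add_sub_cancel] at this
      omega

lemma Ahat_repr (hd : 0 < d) (hK : kalmanSpan d m A B n = ⊤) :
    Ahat A B e n = (Emat e)ᵀ * Cmat A B e * Emat e := by
  classical
  have hC : ∀ i j : Fin d,
      (if ∃ k, 1 ≤ k ∧ k ≤ n - 1 ∧
            (dk A B (k - 1) < (j : ℕ) + 1 ∧ (j : ℕ) + 1 ≤ dk A B k) ∧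
            (dk A B k < (i : ℕ) + 1 ∧ (i : ℕ) + 1 ≤ dk A B (k + 1))
        then e i ⬝ᵥ A.mulVec (e j) else 0) = Cmat A B e i j := by
    intro i j
    rw [Cmat]
    simp only [Matrix.of_apply]
    by_cases h : lvl A B i = lvl A B j + 1
    · rw [if_pos h, if_pos ((cond_iff hd hK i j).mpr h)]
    · rw [if_neg h, if_neg (fun hc => h ((cond_iff hd hK i j).mp hc))]
  ext a b
  simp only [Ahat, Matrix.of_apply]
  simp only [hC]
  simp only [Matrix.mul_apply]
  rw [Finset.sum_comm]
  refine Finset.sum_congr rfl fun j _ => ?_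
  rw [Finset.sum_mul]
  refine Finset.sum_congr rfl fun i _ => ?_
  show Cmat A B e i j * e i a * e j b = (Emat e)ᵀ a i * Cmat A B e i j * Emat e j b
  show Cmat A B e i j * e i a * e j b = e i a * Cmat A B e i j * e j b
  ring

end PartB
section PartC
variable {d m : ℕ} {A : Matrix (Fin d) (Fin d) ℝ} {B : Matrix (Fin d) (Fin m) ℝ}
  {e : Fin d → Fin d → ℝ} {n : ℕ}

lemma dot_eq_zero_of_lvl_gt (hK : kalmanSpan d m A B n = ⊤)
    (h_on : ∀ i j : Fin d, e i ⬝ᵥ e j = if i = j then (1:ℝ) else 0)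
    (h_adapt : ∀ k : ℕ, 1 ≤ k → k ≤ n →
      kalmanSpan d m A B k =
        Submodule.span ℝ {x | ∃ j : Fin d, (j : ℕ) < dk A B k ∧ x = e j})
    {k : ℕ} (hk1 : 1 ≤ k) (hkn : k ≤ n) {x : Fin d → ℝ}
    (hx : x ∈ kalmanSpan d m A B k) {i : Fin d} (hi : k < lvl A B i) :
    e i ⬝ᵥ x = 0 := by
  rw [h_adapt k hk1 hkn] at hx
  induction hx using Submodule.span_induction with
  | mem x h =>
    obtain ⟨j, hj, rfl⟩ := h
    have hij : i ≠ j := by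
      intro hc
      subst hc
      have := (lvl_le_iff A B hK i k).mpr hj
      omega
    rw [h_on i j, if_neg hij]
  | zero => exact dotProduct_zero _
  | add x y hx hy ihx ihy => rw [dotProduct_add, ihx, ihy, add_zero]
  | smul a x hx ih => rw [dotProduct_smul, ih, smul_zero]

lemma Emul_apply {m' : ℕ} (M : Matrix (Fin d) (Fin m') ℝ) (i : Fin d) (c : Fin m') :
    (Emat e * M) i c = e i ⬝ᵥ (M.mulVec (Pi.single c 1)) := by
  simp only [Matrix.mul_apply, dotProduct, Matrix.mulVec, dotProduct, Pi.single_apply,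
    mul_ite, mul_one, mul_zero, Finset.sum_ite_eq', Finset.mem_univ, if_true]
  rfl

lemma rowzero (hK : kalmanSpan d m A B n = ⊤)
    (h_on : ∀ i j : Fin d, e i ⬝ᵥ e j = if i = j then (1:ℝ) else 0)
    (h_adapt : ∀ k : ℕ, 1 ≤ k → k ≤ n →
      kalmanSpan d m A B k =
        Submodule.span ℝ {x | ∃ j : Fin d, (j : ℕ) < dk A B k ∧ x = e j})
    {k : ℕ} (hk1 : 1 ≤ k) (hkn : k ≤ n) {m' : ℕ} (M : Matrix (Fin d) (Fin m') ℝ)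
    (hM : ∀ v, M.mulVec v ∈ kalmanSpan d m A B k) {i : Fin d} (hi : k < lvl A B i)
    (c : Fin m') : (Emat e * M) i c = 0 := by
  rw [Emul_apply]
  exact dot_eq_zero_of_lvl_gt hK h_on h_adapt hk1 hkn (hM _) hi

lemma Deq_mul_zero (hK : kalmanSpan d m A B n = ⊤)
    (h_on : ∀ i j : Fin d, e i ⬝ᵥ e j = if i = j then (1:ℝ) else 0)
    (h_adapt : ∀ k : ℕ, 1 ≤ k → k ≤ n →
      kalmanSpan d m A B k =
        Submodule.span ℝ {x | ∃ j : Fin d, (j : ℕ) < dk A B k ∧ x = e j})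
    {k k' : ℕ} (hk1 : 1 ≤ k) (hkn : k ≤ n) (hkk : k < k') {m' : ℕ}
    (M : Matrix (Fin d) (Fin m') ℝ) (hM : ∀ v, M.mulVec v ∈ kalmanSpan d m A B k) :
    Deq A B k' * (Emat e * M) = 0 := by
  ext i c
  rw [Deq, Matrix.diagonal_mul, Matrix.zero_apply]
  by_cases h : lvl A B i = k'
  · rw [if_pos h, one_mul]
    exact rowzero hK h_on h_adapt hk1 hkn M hM (by omega) c
  · rw [if_neg h, zero_mul]

lemma Dgt_mul_zero (hK : kalmanSpan d m A B n = ⊤)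
    (h_on : ∀ i j : Fin d, e i ⬝ᵥ e j = if i = j then (1:ℝ) else 0)
    (h_adapt : ∀ k : ℕ, 1 ≤ k → k ≤ n →
      kalmanSpan d m A B k =
        Submodule.span ℝ {x | ∃ j : Fin d, (j : ℕ) < dk A B k ∧ x = e j})
    {k : ℕ} (hk1 : 1 ≤ k) (hkn : k ≤ n) {m' : ℕ}
    (M : Matrix (Fin d) (Fin m') ℝ) (hM : ∀ v, M.mulVec v ∈ kalmanSpan d m A B k) :
    Dgt A B k * (Emat e * M) = 0 := by
  ext i c
  rw [Dgt, Matrix.diagonal_mul, Matrix.zero_apply]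
  by_cases h : k < lvl A B i
  · rw [if_pos h, one_mul]
    exact rowzero hK h_on h_adapt hk1 hkn M hM h c
  · rw [if_neg h, zero_mul]

lemma mulVec_mem_succ {k : ℕ} {x : Fin d → ℝ} (hx : x ∈ kalmanSpan d m A B k) :
    A.mulVec x ∈ kalmanSpan d m A B (k + 1) := by
  induction hx using Submodule.span_induction with
  | mem x h =>
    obtain ⟨l, hl, v, rfl⟩ := h
    rw [Matrix.mulVec_mulVec, ← Matrix.mul_assoc, ← pow_succ']
    exact mem_kalmanSpan A B (by omega) v
  | zero => rw [Matrix.mulVec_zero]; exact Submodule.zero_mem _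
  | add x y hx hy ihx ihy => rw [Matrix.mulVec_add]; exact Submodule.add_mem _ ihx ihy
  | smul a x hx ih => rw [Matrix.mulVec_smul]; exact Submodule.smul_mem _ _ ih

lemma transpose_mulVec_eq_sum (w : Fin d → ℝ) :
    (Emat e)ᵀ.mulVec w = ∑ j, w j • e j := by
  funext a
  rw [Finset.sum_apply]
  simp only [Matrix.mulVec, dotProduct, Matrix.transpose_apply, Pi.smul_apply, smul_eq_mul]
  exact Finset.sum_congr rfl fun j _ => by rw [mul_comm]; rfl

lemma Dle_cols_mem (hK : kalmanSpan d m A B n = ⊤)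
    (h_on : ∀ i j : Fin d, e i ⬝ᵥ e j = if i = j then (1:ℝ) else 0)
    (h_adapt : ∀ k : ℕ, 1 ≤ k → k ≤ n →
      kalmanSpan d m A B k =
        Submodule.span ℝ {x | ∃ j : Fin d, (j : ℕ) < dk A B k ∧ x = e j})
    {k : ℕ} (hkn : k ≤ n) {m' : ℕ} (M : Matrix (Fin d) (Fin m') ℝ) (v : Fin m' → ℝ) :
    ((Emat e)ᵀ * (Dle A B k * (Emat e * M))).mulVec v ∈ kalmanSpan d m A B k := by
  rw [← Matrix.mulVec_mulVec, transpose_mulVec_eq_sum]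
  apply Submodule.sum_mem
  intro j _
  by_cases h : lvl A B j ≤ k
  · apply Submodule.smul_mem
    have hk1 : 1 ≤ k := le_trans (one_le_lvl A B hK j) h
    rw [h_adapt k hk1 hkn]
    exact Submodule.subset_span ⟨j, (lvl_le_iff A B hK j k).mp h, rfl⟩
  · have : (Dle A B k * (Emat e * M)).mulVec v j = 0 := by
      simp only [Matrix.mulVec, dotProduct, Dle, Matrix.diagonal_mul, if_neg h, zero_mul]
      simp
    rw [this, zero_smul]
    exact Submodule.zero_mem _

lemma EAE_apply (i j : Fin d) :
    (Emat e * A * (Emat e)ᵀ) i j = e i ⬝ᵥ A.mulVec (e j) := by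
  simp only [Matrix.mul_apply, Matrix.transpose_apply, dotProduct, Matrix.mulVec,
    dotProduct, Finset.sum_mul, Finset.mul_sum]
  rw [Finset.sum_comm]
  refine Finset.sum_congr rfl fun s _ => Finset.sum_congr rfl fun t _ => ?_
  show e i s * A s t * e j t = e i s * (A s t * e j t)
  ring

lemma C_Deq (l : ℕ) :
    Cmat A B e * Deq A B (l+1) =
      Deq A B (l+2) * (Emat e * A * (Emat e)ᵀ) * Deq A B (l+1) := by
  ext i j
  simp only [Cmat, Matrix.of_apply, Deq, Matrix.mul_diagonal, Matrix.diagonal_mul, EAE_apply]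
  by_cases hj : lvl A B j = l + 1
  · rw [if_pos hj, mul_one, mul_one]
    by_cases hi : lvl A B i = l + 2
    · rw [if_pos hi, one_mul, if_pos (by omega)]
    · rw [if_neg hi, zero_mul, if_neg (by omega)]
  · rw [if_neg hj, mul_zero, mul_zero]

end PartC
section PartD
variable {d m : ℕ} {A : Matrix (Fin d) (Fin d) ℝ} {B : Matrix (Fin d) (Fin m) ℝ}
  {e : Fin d → Fin d → ℝ} {n : ℕ}

lemma Dle_zero_eq (hK : kalmanSpan d m A B n = ⊤) : Dle A B 0 = (0 : Matrix (Fin d) (Fin d) ℝ) := by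
  ext i j
  rw [Dle]
  by_cases h : i = j
  · subst h
    rw [Matrix.diagonal_apply_eq, if_neg (by have := one_le_lvl A B hK i; omega), Matrix.zero_apply]
  · rw [Matrix.diagonal_apply_ne _ h, Matrix.zero_apply]

lemma Deq_split (k : ℕ) :
    Deq A B (k+1) = 1 - Dle A B k - Dgt A B (k+1) := by
  ext i j
  by_cases h : i = j
  · subst h
    simp only [Deq, Dle, Dgt, Matrix.sub_apply, Matrix.diagonal_apply_eq, Matrix.one_apply_eq]
    split_ifs <;> (first | omega | norm_num)
  · simp only [Deq, Dle, Dgt, Matrix.sub_apply, Matrix.diagonal_apply_ne _ h,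
      Matrix.one_apply_ne h]
    norm_num

lemma H1 (hK : kalmanSpan d m A B n = ⊤)
    (h_on : ∀ i j : Fin d, e i ⬝ᵥ e j = if i = j then (1:ℝ) else 0)
    (h_adapt : ∀ k : ℕ, 1 ≤ k → k ≤ n →
      kalmanSpan d m A B k =
        Submodule.span ℝ {x | ∃ j : Fin d, (j : ℕ) < dk A B k ∧ x = e j})
    {k : ℕ} (hk : k + 1 ≤ n) (M : Matrix (Fin d) (Fin m) ℝ)
    (hM : ∀ v, M.mulVec v ∈ kalmanSpan d m A B (k+1)) :
    (Emat e)ᵀ * (Deq A B (k+1) * (Emat e * M)) =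
      M - (Emat e)ᵀ * (Dle A B k * (Emat e * M)) := by
  have h3 : Dgt A B (k+1) * (Emat e * M) = 0 :=
    Dgt_mul_zero hK h_on h_adapt (by omega) hk M hM
  rw [Deq_split k, Matrix.sub_mul, Matrix.sub_mul, Matrix.one_mul, h3, sub_zero,
    Matrix.mul_sub, ← Matrix.mul_assoc, Emat_transpose_mul h_on, Matrix.one_mul]

lemma CI (hd : 0 < d) (hK : kalmanSpan d m A B n = ⊤)
    (h_on : ∀ i j : Fin d, e i ⬝ᵥ e j = if i = j then (1:ℝ) else 0)
    (h_adapt : ∀ k : ℕ, 1 ≤ k → k ≤ n →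
      kalmanSpan d m A B k =
        Submodule.span ℝ {x | ∃ j : Fin d, (j : ℕ) < dk A B k ∧ x = e j}) :
    ∀ l, l + 1 ≤ n →
      Ahat A B e n ^ l * B = (Emat e)ᵀ * (Deq A B (l+1) * (Emat e * (A ^ l * B))) := by
  intro l
  induction l with
  | zero =>
    intro hl
    have hB : ∀ v, B.mulVec v ∈ kalmanSpan d m A B 1 := by
      intro v
      have := mem_kalmanSpan A B (show 0 < 1 by omega) v
      rwa [pow_zero, Matrix.one_mul] at this
    rw [pow_zero, Matrix.one_mul, pow_zero, Matrix.one_mul]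
    rw [H1 hK h_on h_adapt hl B hB, Dle_zero_eq hK, Matrix.zero_mul, Matrix.mul_zero, sub_zero]
  | succ l ih =>
    intro hl
    have h12 : l + 1 + 1 = l + 2 := rfl
    have hXmem : ∀ v, (A ^ l * B).mulVec v ∈ kalmanSpan d m A B (l+1) :=
      fun v => mem_kalmanSpan A B (by omega) v
    have hstep : Ahat A B e n ^ (l+1) * B
        = (Emat e)ᵀ * (Deq A B (l+2) *
            (Emat e * (A * ((Emat e)ᵀ * (Deq A B (l+1) * (Emat e * (A ^ l * B))))))) := by
      rw [pow_succ', Matrix.mul_assoc, ih (by omega), Ahat_repr hd hK]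
      simp only [← Matrix.mul_assoc]
      rw [Matrix.mul_assoc ((Emat e)ᵀ * Cmat A B e) (Emat e) (Emat e)ᵀ,
        Emat_mul_transpose h_on, Matrix.mul_one]
      rw [Matrix.mul_assoc ((Emat e)ᵀ) (Cmat A B e) (Deq A B (l+1)), C_Deq l]
      simp only [← Matrix.mul_assoc]
    rw [hstep, H1 hK h_on h_adapt (by omega) _ hXmem]
    have hZ : Deq A B (l+2) *
        (Emat e * (A * ((Emat e)ᵀ * (Dle A B l * (Emat e * (A ^ l * B)))))) = 0 := by
      apply Deq_mul_zero hK h_on h_adapt (show 1 ≤ l+1 by omega) (show l+1 ≤ n by omega)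
        (show l+1 < l+2 by omega)
      intro v
      rw [← Matrix.mulVec_mulVec]
      exact mulVec_mem_succ (Dle_cols_mem hK h_on h_adapt (by omega) _ v)
    rw [Matrix.mul_sub A, Matrix.mul_sub (Emat e), Matrix.mul_sub (Deq A B (l+2)),
      Matrix.mul_sub ((Emat e)ᵀ), hZ, Matrix.mul_zero, sub_zero]
    rw [← Matrix.mul_assoc A, ← pow_succ', h12]

lemma Cmat_pow_zero (hK : kalmanSpan d m A B n = ⊤) :
    Cmat A B e ^ n = 0 := by
  have key : ∀ p, ∀ i j : Fin d, lvl A B i ≠ lvl A B j + p → (Cmat A B e ^ p) i j = 0 := by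
    intro p
    induction p with
    | zero =>
      intro i j h
      rw [pow_zero, Matrix.one_apply, if_neg]
      intro hc; subst hc; omega
    | succ p ih =>
      intro i j h
      rw [pow_succ', Matrix.mul_apply]
      apply Finset.sum_eq_zero
      intro t _
      by_cases ht : lvl A B i = lvl A B t + 1
      · rw [ih t j (by omega), mul_zero]
      · show Cmat A B e i t * _ = 0
        rw [Cmat, Matrix.of_apply, if_neg ht, zero_mul]
  ext i j
  rw [Matrix.zero_apply]
  apply key
  have h1 := one_le_lvl A B hK j
  have h2 := lvl_le_n A B hK i
  omega

lemma Ahat_pow_n_zero (hd : 0 < d) (hK : kalmanSpan d m A B n = ⊤)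
    (h_on : ∀ i j : Fin d, e i ⬝ᵥ e j = if i = j then (1:ℝ) else 0) :
    Ahat A B e n ^ n = 0 := by
  have h : ∀ p, Ahat A B e n ^ p = (Emat e)ᵀ * Cmat A B e ^ p * Emat e := by
    intro p
    induction p with
    | zero => rw [pow_zero, pow_zero, Matrix.mul_one, Emat_transpose_mul h_on]
    | succ p ih =>
      rw [pow_succ, pow_succ, ih, Ahat_repr hd hK]
      simp only [← Matrix.mul_assoc]
      rw [Matrix.mul_assoc ((Emat e)ᵀ * Cmat A B e ^ p) (Emat e) (Emat e)ᵀ,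
        Emat_mul_transpose h_on, Matrix.mul_one]
  rw [h n, Cmat_pow_zero hK, Matrix.mul_zero, Matrix.zero_mul]

end PartD
section PartE
variable {d m : ℕ} {A : Matrix (Fin d) (Fin d) ℝ} {B : Matrix (Fin d) (Fin m) ℝ}
  {e : Fin d → Fin d → ℝ} {n : ℕ}

lemma diag_cols_mem (hK : kalmanSpan d m A B n = ⊤)
    (h_on : ∀ i j : Fin d, e i ⬝ᵥ e j = if i = j then (1:ℝ) else 0)
    (h_adapt : ∀ k : ℕ, 1 ≤ k → k ≤ n →
      kalmanSpan d m A B k =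
        Submodule.span ℝ {x | ∃ j : Fin d, (j : ℕ) < dk A B k ∧ x = e j})
    {k : ℕ} (hkn : k ≤ n) (f : Fin d → ℝ) (hf : ∀ j, f j ≠ 0 → lvl A B j ≤ k)
    {m' : ℕ} (M : Matrix (Fin d) (Fin m') ℝ) (v : Fin m' → ℝ) :
    ((Emat e)ᵀ * (Matrix.diagonal f * (Emat e * M))).mulVec v ∈ kalmanSpan d m A B k := by
  rw [← Matrix.mulVec_mulVec, transpose_mulVec_eq_sum]
  apply Submodule.sum_mem
  intro j _
  by_cases h : f j = 0
  · have : (Matrix.diagonal f * (Emat e * M)).mulVec v j = 0 := by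
      simp only [Matrix.mulVec, dotProduct, Matrix.diagonal_mul, h, zero_mul]
      simp
    rw [this, zero_smul]
    exact Submodule.zero_mem _
  · apply Submodule.smul_mem
    have hle := hf j h
    have hk1 : 1 ≤ k := le_trans (one_le_lvl A B hK j) hle
    rw [h_adapt k hk1 hkn]
    exact Submodule.subset_span ⟨j, (lvl_le_iff A B hK j k).mp hle, rfl⟩

lemma kalman_eq (hd : 0 < d) (hK : kalmanSpan d m A B n = ⊤)
    (h_on : ∀ i j : Fin d, e i ⬝ᵥ e j = if i = j then (1:ℝ) else 0)
    (h_adapt : ∀ k : ℕ, 1 ≤ k → k ≤ n →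
      kalmanSpan d m A B k =
        Submodule.span ℝ {x | ∃ j : Fin d, (j : ℕ) < dk A B k ∧ x = e j}) :
    ∀ k : ℕ, 1 ≤ k → k ≤ n →
      kalmanSpan d m (Ahat A B e n) B k = kalmanSpan d m A B k := by
  have hsub : ∀ k : ℕ, 1 ≤ k → k ≤ n →
      kalmanSpan d m (Ahat A B e n) B k ≤ kalmanSpan d m A B k := by
    intro k hk1 hkn
    rw [kalmanSpan]
    apply Submodule.span_le.mpr
    rintro x ⟨l, hl, v, rfl⟩
    rw [CI hd hK h_on h_adapt l (by omega)]
    apply diag_cols_mem hK h_on h_adapt hkn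
    intro j hj
    by_cases h : lvl A B j = l + 1
    · omega
    · exact absurd (if_neg h) hj
  intro k
  induction k with
  | zero => omega
  | succ k ih =>
    intro _ hkn
    refine le_antisymm (hsub (k+1) (by omega) hkn) ?_
    rw [kalmanSpan]
    apply Submodule.span_le.mpr
    rintro x ⟨l, hl, v, rfl⟩
    rcases Nat.lt_or_ge l k with hlk | hlk
    · -- l < k, so k ≥ 1 and we can use ih
      have hk1 : 1 ≤ k := by omega
      have := ih hk1 (by omega)
      have hx : (A ^ l * B).mulVec v ∈ kalmanSpan d m A B k := mem_kalmanSpan A B hlk v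
      rw [← this] at hx
      exact kalmanSpan_mono (Ahat A B e n) B (by omega : k ≤ k + 1) hx
    · have hlk' : l = k := by omega
      subst hlk'
      -- decompose A^l * B
      have hXmem : ∀ w, (A ^ l * B).mulVec w ∈ kalmanSpan d m A B (l+1) :=
        fun w => mem_kalmanSpan A B (by omega) w
      have hdecomp : A ^ l * B =
          (Emat e)ᵀ * (Dle A B l * (Emat e * (A ^ l * B))) + Ahat A B e n ^ l * B := by
        have h1 : A ^ l * B = (Emat e)ᵀ * (Emat e * (A ^ l * B)) := by
          rw [← Matrix.mul_assoc, Emat_transpose_mul h_on, Matrix.one_mul]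
        have h2 : (1 : Matrix (Fin d) (Fin d) ℝ) = Dle A B l + Deq A B (l+1) + Dgt A B (l+1) := by
          rw [Deq_split l]
          abel
        have h3 : Dgt A B (l+1) * (Emat e * (A ^ l * B)) = 0 :=
          Dgt_mul_zero hK h_on h_adapt (by omega) (by omega) _ hXmem
        calc A ^ l * B = (Emat e)ᵀ * (Emat e * (A ^ l * B)) := h1
          _ = (Emat e)ᵀ * ((Dle A B l + Deq A B (l+1) + Dgt A B (l+1)) * (Emat e * (A ^ l * B))) := by
              rw [← h2, Matrix.one_mul]
          _ = (Emat e)ᵀ * (Dle A B l * (Emat e * (A ^ l * B)))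
              + (Emat e)ᵀ * (Deq A B (l+1) * (Emat e * (A ^ l * B)))
              + (Emat e)ᵀ * (Dgt A B (l+1) * (Emat e * (A ^ l * B))) := by
              rw [Matrix.add_mul, Matrix.add_mul, Matrix.mul_add, Matrix.mul_add]
          _ = (Emat e)ᵀ * (Dle A B l * (Emat e * (A ^ l * B))) + Ahat A B e n ^ l * B := by
              rw [h3, Matrix.mul_zero, add_zero, CI hd hK h_on h_adapt l (by omega)]
      rw [hdecomp, Matrix.add_mulVec]
      apply Submodule.add_mem
      · -- first term lives in kalman A l ⊆ kalman Ahat (l+1) (via ih when l ≥ 1, or = 0)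
        rcases Nat.eq_zero_or_pos l with hl0 | hl1
        · subst hl0
          rw [Dle_zero_eq hK, Matrix.zero_mul, Matrix.mul_zero, Matrix.zero_mulVec]
          exact Submodule.zero_mem _
        · have hmem : ((Emat e)ᵀ * (Dle A B l * (Emat e * (A ^ l * B)))).mulVec v
              ∈ kalmanSpan d m A B l := by
            apply diag_cols_mem hK h_on h_adapt (by omega)
            intro j hj
            by_cases h : lvl A B j ≤ l
            · exact h
            · exact absurd (if_neg h) hj
          rw [← ih hl1 (by omega)] at hmem
          exact kalmanSpan_mono (Ahat A B e n) B (by omega : l ≤ l + 1) hmem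
      · exact mem_kalmanSpan (Ahat A B e n) B (by omega) v

end PartE
open intervalIntegral

lemma Ibeta (p q : ℕ) : ∫ s in (0:ℝ)..1, s ^ p * (1-s) ^ q
    = (p.factorial * q.factorial : ℝ) / (p+q+1).factorial := by
  induction q generalizing p with
  | zero =>
    simp only [pow_zero, mul_one, integral_pow, Nat.factorial_zero, Nat.add_zero,
      Nat.factorial_succ, Nat.cast_one, one_pow]
    rw [zero_pow (by omega), sub_zero]
    push_cast
    rw [div_eq_div_iff (by positivity) (by positivity)]
    ring
  | succ q ih =>
    have hderiv : ∀ s : ℝ, HasDerivAt (fun s : ℝ => s ^ (p+1) * (1-s) ^ (q+1))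
        ((p+1) * s ^ p * (1-s)^(q+1) - (q+1) * s^(p+1) * (1-s)^q) s := by
      intro s
      have h1 : HasDerivAt (fun s : ℝ => s ^ (p+1)) ((p+1) * s ^ p) s := by
        simpa using hasDerivAt_pow (p+1) s
      have h2 : HasDerivAt (fun s : ℝ => (1-s) ^ (q+1)) (-((q+1) * (1-s) ^ q)) s := by
        have h3 : HasDerivAt (fun s : ℝ => 1 - s) (-1) s := by
          simpa using (hasDerivAt_id s).const_sub 1
        have := (hasDerivAt_pow (q+1) (1-s)).comp s h3
        simpa [mul_comm, Function.comp_def] using this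
      have := h1.mul h2
      exact this.congr_deriv (by push_cast; ring)
    have key : ∫ s in (0:ℝ)..1, ((p+1) * s ^ p * (1-s)^(q+1) - (q+1) * s^(p+1) * (1-s)^q)
        = 0 := by
      rw [integral_eq_sub_of_hasDerivAt (fun s _ => hderiv s)]
      · norm_num
      · apply Continuous.intervalIntegrable
        continuity
    have hint1 : IntervalIntegrable (fun s : ℝ => (p+1 : ℝ) * s ^ p * (1-s)^(q+1))
        MeasureTheory.volume 0 1 := by apply Continuous.intervalIntegrable; continuity
    have hint2 : IntervalIntegrable (fun s : ℝ => (q+1 : ℝ) * s ^ (p+1) * (1-s)^q)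
        MeasureTheory.volume 0 1 := by apply Continuous.intervalIntegrable; continuity
    rw [integral_sub hint1 hint2, sub_eq_zero] at key
    have e1 : ∫ s in (0:ℝ)..1, (p+1 : ℝ) * s ^ p * (1-s)^(q+1)
        = (p+1 : ℝ) * ∫ s in (0:ℝ)..1, s ^ p * (1-s)^(q+1) := by
      rw [← intervalIntegral.integral_const_mul]; congr 1; ext s; ring
    have e2 : ∫ s in (0:ℝ)..1, (q+1 : ℝ) * s ^ (p+1) * (1-s)^q
        = (q+1 : ℝ) * ∫ s in (0:ℝ)..1, s ^ (p+1) * (1-s)^q := by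
      rw [← intervalIntegral.integral_const_mul]; congr 1; ext s; ring
    rw [e1, e2, ih (p+1)] at key
    have hp1 : (p+1 : ℝ) ≠ 0 := by positivity
    have hidx : p + 1 + q + 1 = p + (q+1) + 1 := by omega
    have key2 : (p+1:ℝ) * ∫ s in (0:ℝ)..1, s ^ p * (1-s)^(q+1)
        = (p+1:ℝ) * ((p.factorial * (q+1).factorial : ℝ) / (p+(q+1)+1).factorial) := by
      rw [key, hidx, Nat.factorial_succ p, Nat.factorial_succ q]
      push_cast
      ring
    exact mul_left_cancel₀ hp1 key2
section PartF
variable {d m : ℕ} {A : Matrix (Fin d) (Fin d) ℝ} {B : Matrix (Fin d) (Fin m) ℝ}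
  {e : Fin d → Fin d → ℝ} {n : ℕ}

lemma exp_nilpotent_sum (d' n' : ℕ) (M : Matrix (Fin d') (Fin d') ℝ) (h : M ^ n' = 0) :
    NormedSpace.exp M = ∑ p ∈ Finset.range n', (p.factorial : ℝ)⁻¹ • M ^ p := by
  rw [NormedSpace.exp_eq_tsum (𝕂 := ℝ)]
  refine tsum_eq_sum ?_
  intro p hp
  rw [pow_eq_zero_of_le (le_of_not_gt (fun hc => hp (Finset.mem_range.mpr hc))) h, smul_zero]

lemma exp_smul_eq_sum (hd : 0 < d) (hK : kalmanSpan d m A B n = ⊤)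
    (h_on : ∀ i j : Fin d, e i ⬝ᵥ e j = if i = j then (1:ℝ) else 0) (t : ℝ) :
    NormedSpace.exp (t • Ahat A B e n)
      = ∑ p ∈ Finset.range n, (t ^ p * (p.factorial : ℝ)⁻¹) • Ahat A B e n ^ p := by
  have hnil : (t • Ahat A B e n) ^ n = 0 := by
    rw [smul_pow, Ahat_pow_n_zero hd hK h_on, smul_zero]
  rw [exp_nilpotent_sum d n _ hnil]
  refine Finset.sum_congr rfl fun p _ => ?_
  rw [smul_pow, smul_smul, mul_comm]

lemma vecMul_e_transpose (h_on : ∀ i j : Fin d, e i ⬝ᵥ e j = if i = j then (1:ℝ) else 0)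
    (a : Fin d) : Matrix.vecMul (e a) (Emat e)ᵀ = Pi.single a 1 := by
  funext i
  have : Matrix.vecMul (e a) (Emat e)ᵀ i = e i ⬝ᵥ e a := by
    simp only [Matrix.vecMul, dotProduct, Matrix.transpose_apply]
    exact Finset.sum_congr rfl fun t _ => by rw [mul_comm]; rfl
  rw [this, h_on i a, Pi.single_apply]

lemma single_vecMul (c : ℝ) {m' : ℕ} (M : Matrix (Fin d) (Fin m') ℝ) (a : Fin d) :
    Matrix.vecMul (Pi.single a c) M = fun j => c * M a j := by
  funext j
  simp only [Matrix.vecMul, dotProduct]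
  rw [Finset.sum_eq_single a]
  · rw [Pi.single_eq_same]
  · intro b _ hb; rw [Pi.single_eq_of_ne hb, zero_mul]
  · intro h; exact absurd (Finset.mem_univ a) h

lemma RF (hd : 0 < d) (hK : kalmanSpan d m A B n = ⊤)
    (h_on : ∀ i j : Fin d, e i ⬝ᵥ e j = if i = j then (1:ℝ) else 0)
    (h_adapt : ∀ k : ℕ, 1 ≤ k → k ≤ n →
      kalmanSpan d m A B k =
        Submodule.span ℝ {x | ∃ j : Fin d, (j : ℕ) < dk A B k ∧ x = e j})
    (a : Fin d) {p : ℕ} (hp : p < n) :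
    Matrix.vecMul (e a) (Ahat A B e n ^ p * B)
      = fun i => if lvl A B a = p + 1 then (p.factorial : ℝ) * uEnt A B e a i else 0 := by
  rw [CI hd hK h_on h_adapt p (by omega)]
  rw [← Matrix.vecMul_vecMul, vecMul_e_transpose h_on, single_vecMul]
  funext i
  rw [one_mul, Deq, Matrix.diagonal_mul]
  by_cases h : lvl A B a = p + 1
  · rw [if_pos h, if_pos h, one_mul, uEnt]
    have hl : lvl A B a - 1 = p := by omega
    rw [hl]
    have hfac : ((p.factorial : ℝ)) ≠ 0 := by
      exact_mod_cast Nat.factorial_ne_zero p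
    rw [mul_comm ((p.factorial : ℝ)), div_mul_cancel₀ _ hfac]
    simp only [Matrix.mul_apply, dotProduct, Emat, Matrix.of_apply]
  · rw [if_neg h, if_neg h, zero_mul]

lemma row_exp (hd : 0 < d) (hK : kalmanSpan d m A B n = ⊤)
    (h_on : ∀ i j : Fin d, e i ⬝ᵥ e j = if i = j then (1:ℝ) else 0)
    (h_adapt : ∀ k : ℕ, 1 ≤ k → k ≤ n →
      kalmanSpan d m A B k =
        Submodule.span ℝ {x | ∃ j : Fin d, (j : ℕ) < dk A B k ∧ x = e j})
    (t : ℝ) (a : Fin d) :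
    Matrix.vecMul (e a) (NormedSpace.exp (t • Ahat A B e n) * B)
      = fun i => t ^ (lvl A B a - 1) * uEnt A B e a i := by
  rw [exp_smul_eq_sum hd hK h_on t, Matrix.sum_mul]
  have hsmul : ∀ p : ℕ, ((t ^ p * (p.factorial : ℝ)⁻¹) • Ahat A B e n ^ p) * B
      = (t ^ p * (p.factorial : ℝ)⁻¹) • (Ahat A B e n ^ p * B) := fun p =>
    Matrix.smul_mul _ _ _
  simp only [hsmul]
  funext i
  have hvm : ∀ i, Matrix.vecMul (e a)
      (∑ p ∈ Finset.range n, (t ^ p * (p.factorial : ℝ)⁻¹) • (Ahat A B e n ^ p * B)) i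
      = ∑ p ∈ Finset.range n,
          (t ^ p * (p.factorial : ℝ)⁻¹) * Matrix.vecMul (e a) (Ahat A B e n ^ p * B) i := by
    intro i
    simp only [Matrix.vecMul, dotProduct, Matrix.sum_apply, Matrix.smul_apply, smul_eq_mul,
      Finset.mul_sum]
    rw [Finset.sum_comm]
    apply Finset.sum_congr rfl
    intro p _
    apply Finset.sum_congr rfl
    intro y _
    ring
  rw [hvm]
  have hRF : ∀ p ∈ Finset.range n,
      (t ^ p * (p.factorial : ℝ)⁻¹) * Matrix.vecMul (e a) (Ahat A B e n ^ p * B) i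
      = if p = lvl A B a - 1 then t ^ (lvl A B a - 1) * uEnt A B e a i else 0 := by
    intro p hp
    simp only [RF hd hK h_on h_adapt a (Finset.mem_range.mp hp)]
    have h1 := one_le_lvl A B hK a
    by_cases h : lvl A B a = p + 1
    · rw [if_pos h, if_pos (by omega)]
      have hl : lvl A B a - 1 = p := by omega
      rw [hl]
      have hfac : ((p.factorial : ℝ)) ≠ 0 := by exact_mod_cast Nat.factorial_ne_zero p
      field_simp
    · rw [if_neg h, if_neg (by omega), mul_zero]
  rw [Finset.sum_congr rfl hRF, Finset.sum_ite_eq' (Finset.range n) (lvl A B a - 1)]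
  rw [if_pos (Finset.mem_range.mpr (by have := lvl_le_n A B hK a; have := one_le_lvl A B hK a; omega))]

end PartF
section PartG
variable {d m : ℕ} {A : Matrix (Fin d) (Fin d) ℝ} {B : Matrix (Fin d) (Fin m) ℝ}
  {e : Fin d → Fin d → ℝ} {n : ℕ}

lemma conj2 (hd : 0 < d) (hK : kalmanSpan d m A B n = ⊤)
    (h_on : ∀ i j : Fin d, e i ⬝ᵥ e j = if i = j then (1:ℝ) else 0)
    (h_adapt : ∀ k : ℕ, 1 ≤ k → k ≤ n →
      kalmanSpan d m A B k =
        Submodule.span ℝ {x | ∃ j : Fin d, (j : ℕ) < dk A B k ∧ x = e j}) :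
    ∀ a b : Fin d,
      Vmat A B e a b =
        e a ⬝ᵥ (NormedSpace.exp (Ahat A B e n) * Gamma (Ahat A B e n) B 1 1).mulVec (e b) := by
  intro a b
  have hk1 := one_le_lvl A B hK a
  have hkn := lvl_le_n A B hK a
  have hl1 := one_le_lvl A B hK b
  have hln := lvl_le_n A B hK b
  set N := Ahat A B e n with hN
  set k := lvl A B a with hk
  set l := lvl A B b with hl
  set F : ℝ → Matrix (Fin d) (Fin d) ℝ :=
    fun s => NormedSpace.exp ((-(1 * s)) • N) * B * Bᵀ * NormedSpace.exp ((-(1 * s)) • Nᵀ)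
    with hF
  have hGamma : ∀ i j, Gamma N B 1 1 i j = ∫ s in (0:ℝ)..1, F s i j := fun i j => rfl
  have hnilT : ∀ s : ℝ, NormedSpace.exp ((-(1*s)) • Nᵀ)
      = (NormedSpace.exp ((-(1*s)) • N))ᵀ := by
    intro s
    rw [← Matrix.transpose_smul, Matrix.exp_transpose]
  have hFG : ∀ s : ℝ, F s = ∑ p ∈ Finset.range n, ∑ q ∈ Finset.range n,
      (((-(1*s)) ^ p * (p.factorial : ℝ)⁻¹) * ((-(1*s)) ^ q * (q.factorial : ℝ)⁻¹)) •
        (N ^ p * B * Bᵀ * (N ^ q)ᵀ) := by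
    intro s
    rw [hF]
    simp only [hnilT s]
    simp only [hnilT s, hN, exp_smul_eq_sum hd hK h_on, Matrix.transpose_sum, Matrix.transpose_smul]
    simp only [Matrix.sum_mul, Matrix.mul_sum, Matrix.smul_mul, Matrix.mul_smul,
      Finset.smul_sum, smul_smul]
    rw [Finset.sum_comm]
    apply Finset.sum_congr rfl
    intro p _
    apply Finset.sum_congr rfl
    intro q _
    congr 1
    ring
  have hcont : ∀ i j, Continuous fun s : ℝ => F s i j := by
    intro i j
    have hfe : (fun s : ℝ => F s i j) = fun s : ℝ =>
        ∑ p ∈ Finset.range n, ∑ q ∈ Finset.range n,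
          (((-(1*s)) ^ p * (p.factorial : ℝ)⁻¹) * ((-(1*s)) ^ q * (q.factorial : ℝ)⁻¹)) *
            (N ^ p * B * Bᵀ * (N ^ q)ᵀ) i j := by
      funext s
      rw [hFG s]
      simp only [Matrix.sum_apply, Matrix.smul_apply, smul_eq_mul]
    rw [hfe]
    apply continuous_finset_sum
    intro p _
    apply continuous_finset_sum
    intro q _
    fun_prop
  rw [Matrix.dotProduct_mulVec, ← Matrix.vecMul_vecMul]
  set ra := Matrix.vecMul (e a) (NormedSpace.exp N) with hra
  have hexpand : (Matrix.vecMul ra (Gamma N B 1 1)) ⬝ᵥ e b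
      = ∑ j, (∑ i, ra i * Gamma N B 1 1 i j) * e b j := rfl
  have hswap : (Matrix.vecMul ra (Gamma N B 1 1)) ⬝ᵥ e b
      = ∫ s in (0:ℝ)..1, ∑ j, (∑ i, ra i * F s i j) * e b j := by
    rw [hexpand]
    have hc2 : ∀ j, Continuous fun s => (∑ i, ra i * F s i j) * e b j := fun j =>
      (continuous_finset_sum _ fun i _ => (continuous_const.mul (hcont i j))).mul continuous_const
    calc ∑ j, (∑ i, ra i * Gamma N B 1 1 i j) * e b j
        = ∑ j, (∑ i, ∫ s in (0:ℝ)..1, ra i * F s i j) * e b j := by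
          apply Finset.sum_congr rfl; intro j _
          congr 1
          apply Finset.sum_congr rfl; intro i _
          rw [hGamma i j, ← intervalIntegral.integral_const_mul]
      _ = ∑ j, (∫ s in (0:ℝ)..1, ∑ i, ra i * F s i j) * e b j := by
          apply Finset.sum_congr rfl; intro j _
          congr 1
          rw [intervalIntegral.integral_finset_sum]
          intro i _
          exact (continuous_const.mul (hcont i j)).intervalIntegrable 0 1
      _ = ∑ j, ∫ s in (0:ℝ)..1, (∑ i, ra i * F s i j) * e b j := by
          apply Finset.sum_congr rfl; intro j _
          rw [← intervalIntegral.integral_mul_const]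
      _ = ∫ s in (0:ℝ)..1, ∑ j, (∑ i, ra i * F s i j) * e b j := by
          rw [intervalIntegral.integral_finset_sum]
          intro j _
          exact (hc2 j).intervalIntegrable 0 1
  rw [hswap]
  have hpt : ∀ s : ℝ, (∑ j, (∑ i, ra i * F s i j) * e b j)
      = ((-1:ℝ)^(l-1) * (∑ i, uEnt A B e a i * uEnt A B e b i)) * (s^(l-1) * (1-s)^(k-1)) := by
    intro s
    have h1 : ∑ j, (∑ i, ra i * F s i j) * e b j = (Matrix.vecMul ra (F s)) ⬝ᵥ e b := rfl
    rw [h1, hra, Matrix.vecMul_vecMul]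
    have hmerge : NormedSpace.exp N * F s
        = (NormedSpace.exp ((1-s) • N) * B) * ((NormedSpace.exp ((-(1*s)) • N)) * B)ᵀ := by
      rw [hF]
      simp only [hnilT s]
      have hcomm : Commute N ((-(1*s)) • N) := (Commute.refl N).smul_right _
      have hadd : N + (-(1*s)) • N = (1-s) • N := by
        rw [sub_smul, one_smul]
        rw [show -(1*s) • N = -(s • N) by rw [neg_smul, one_mul]]
        abel
      have hmul : NormedSpace.exp N * NormedSpace.exp ((-(1*s)) • N)
          = NormedSpace.exp ((1-s) • N) := by
        rw [← Matrix.exp_add_of_commute N ((-(1*s)) • N) hcomm, hadd]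
      rw [Matrix.transpose_mul, ← Matrix.mul_assoc]
      simp only [← Matrix.mul_assoc]
      rw [hmul]
    rw [hmerge, ← Matrix.vecMul_vecMul]
    rw [row_exp hd hK h_on h_adapt (1-s) a]
    rw [Matrix.vecMul_transpose, dotProduct_comm, Matrix.dotProduct_mulVec]
    rw [row_exp hd hK h_on h_adapt (-(1*s)) b]
    show (∑ i, ((-(1*s)) ^ (l - 1) * uEnt A B e b i) * ((1-s) ^ (k - 1) * uEnt A B e a i)) = _
    have hterm : ∀ i, ((-(1*s)) ^ (l - 1) * uEnt A B e b i) * ((1-s) ^ (k - 1) * uEnt A B e a i)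
        = ((-1:ℝ)^(l-1) * (uEnt A B e a i * uEnt A B e b i)) * (s^(l-1) * (1-s)^(k-1)) := by
      intro i
      rw [show -(1*s) = -s by ring, neg_pow]
      ring
    rw [Finset.sum_congr rfl fun i _ => hterm i, ← Finset.sum_mul, ← Finset.mul_sum]
  simp only [hpt]
  rw [intervalIntegral.integral_const_mul, Ibeta (l-1) (k-1)]
  simp only [Vmat, Matrix.of_apply]
  rw [show (l-1) + (k-1) + 1 = k + l - 1 from by omega]
  rw [show l + 1 = (l-1) + 2 from by omega, pow_add]
  norm_num
  ring
theorem Ahat_kalman_and_V_eq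
    (d m : ℕ) (hd : 0 < d) (hm : 0 < m)
    (A : Matrix (Fin d) (Fin d) ℝ) (B : Matrix (Fin d) (Fin m) ℝ)
    (n : ℕ) (hK : kalmanSpan d m A B n = ⊤)
    (hmin : ∀ N : ℕ, kalmanSpan d m A B N = ⊤ → n ≤ N)
    (e : Fin d → Fin d → ℝ)
    (h_on : ∀ i j : Fin d, e i ⬝ᵥ e j = if i = j then (1:ℝ) else 0)
    (h_adapt : ∀ k : ℕ, 1 ≤ k → k ≤ n →
      kalmanSpan d m A B k =
        Submodule.span ℝ {x | ∃ j : Fin d, (j : ℕ) < dk A B k ∧ x = e j}) :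
    kalmanSpan d m (Ahat A B e n) B n = ⊤ ∧
    (∀ a b : Fin d,
      Vmat A B e a b =
        e a ⬝ᵥ (NormedSpace.exp (Ahat A B e n) * Gamma (Ahat A B e n) B 1 1).mulVec (e b)) ∧
    (∀ k : ℕ, 1 ≤ k → k ≤ n → kalmanSpan d m (Ahat A B e n) B k = kalmanSpan d m A B k) := by
  refine ⟨?_, ?_, kalman_eq hd hK h_on h_adapt⟩
  · rw [kalman_eq hd hK h_on h_adapt n (one_le_n hd hK) le_rfl, hK]
  · exact conj2 hd hK h_on h_adapt
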